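/- (Discrete Noether theorem, forward direction.) Let (M, μ) be a symplectic manifold and f: M → M a symplectic diffeomorphism (f^*μ = μ) with connected M. Suppose Y is a Hamiltonian vector field with Hamiltonian I (i_Y μ = dI) such that f^*Y = Y. Then I ∘ f = I + c for some constant c; and if f has a recurrent point (a point x* such that f^{t_i}(x*) → x* along some sequence t_i → ∞) then c = 0, so I is an invariant of f. -/

import Mathlib

open Filter

/-- discrete Noether theorem, forward direction: on a connected
symplectic manifold (modeled on a normed space `E`, symplectic form `μ`), if `f`
is symplectic (`f^*μ = μ`) and `Y` is a Hamiltonian vector field with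
Hamiltonian `I` (`i_Y μ = dI`) which is a symmetry of `f` (`f^*Y = Y`, i.e.
`Df(x)(Y x) = Y (f x)`), then `I ∘ f = I + c` for a constant `c`; and if `f`
has a recurrent point then `c = 0`, so `I` is an invariant of `f`. -/
theorem discrete_noether_forward
    {E : Type*} [NormedAddCommGroup E] [NormedSpace ℝ E]
    (μ : E → E →ₗ[ℝ] E →ₗ[ℝ] ℝ)
    (f : E → E) (hf : Differentiable ℝ f)
    (Y : E → E) (I : E → ℝ) (hI : Differentiable ℝ I)
    (hHam : ∀ x v, μ x (Y x) v = fderiv ℝ I x v)          -- i_Y μ = dI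
    (hsymp : ∀ x u v, μ (f x) (fderiv ℝ f x u) (fderiv ℝ f x v) = μ x u v)  -- f^*μ = μ
    (hsymY : ∀ x, fderiv ℝ f x (Y x) = Y (f x)) :          -- f^*Y = Y
    ∃ c : ℝ, (∀ x, I (f x) = I x + c) ∧
      ((∃ (xstar : E) (t : ℕ → ℕ), StrictMono t ∧
          Tendsto (fun i => f^[t i] xstar) atTop (nhds xstar)) → c = 0) := by
  -- the map g = I ∘ f - I has zero derivative, hence is constant
  have hg : Differentiable ℝ (fun x => I (f x) - I x) := (hI.comp hf).sub hI
  have hderiv : ∀ x, fderiv ℝ (fun x => I (f x) - I x) x = 0 := by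
    intro x
    have hcomp : fderiv ℝ (fun x => I (f x)) x =
        (fderiv ℝ I (f x)).comp (fderiv ℝ f x) :=
      fderiv_comp x (hI (f x)) (hf x)
    have hd1 : DifferentiableAt ℝ (fun y => I (f y)) x := (hI (f x)).comp x (hf x)
    rw [fderiv_fun_sub hd1 (hI x), hcomp]
    ext v
    simp only [ContinuousLinearMap.coe_comp', Function.comp_apply,
      ContinuousLinearMap.sub_apply, ContinuousLinearMap.zero_apply]
    have h1 : fderiv ℝ I (f x) (fderiv ℝ f x v) = μ (f x) (Y (f x)) (fderiv ℝ f x v) :=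
      (hHam (f x) _).symm
    rw [h1, ← hsymY x, hsymp x (Y x) v, hHam x v, sub_self]
  have hconst : ∀ x y : E, I (f x) - I x = I (f y) - I y := fun x y =>
    is_const_of_fderiv_eq_zero hg hderiv x y
  refine ⟨I (f 0) - I 0, fun x => by have := hconst x 0; linarith, ?_⟩
  set c := I (f 0) - I 0 with hc
  have hfc : ∀ x, I (f x) = I x + c := fun x => by have := hconst x 0; linarith
  rintro ⟨xstar, t, hst, htend⟩
  -- I (f^[n] x) = I x + n • c
  have hiter : ∀ (n : ℕ) (x : E), I (f^[n] x) = I x + n * c := by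
    intro n
    induction n with
    | zero => simp
    | succ k ih =>
      intro x
      rw [Function.iterate_succ_apply', hfc, ih x]
      push_cast; ring
  by_contra hcne
  have hIt : Tendsto (fun i => I (f^[t i] xstar)) atTop (nhds (I xstar)) :=
    ((hI.continuous.tendsto xstar).comp htend)
  have hIt' : Tendsto (fun i => I xstar + (t i : ℝ) * c) atTop (nhds (I xstar)) := by
    simpa only [hiter] using hIt
  have h0 : Tendsto (fun i => (t i : ℝ) * c) atTop (nhds 0) := by
    have := hIt'.sub (tendsto_const_nhds (x := I xstar))
    simpa using this
  have htc : Tendsto (fun i => ((t i : ℕ) : ℝ)) atTop atTop :=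
    tendsto_natCast_atTop_atTop.comp hst.tendsto_atTop
  have : Tendsto (fun i => ((t i : ℕ) : ℝ)) atTop (nhds 0) := by
    have := h0.mul_const c⁻¹
    simpa [mul_assoc, mul_inv_cancel₀ hcne] using this
  exact not_tendsto_nhds_of_tendsto_atTop htc 0 this
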